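/- For every positive integer n, the largest real root τ of D_n(t) = t^9 - (n+3)t^8 - (n-4)t^7 + (2n-8)t^6 + (2n+8)t^5 + (2n-8)t^4 - (2n-11)t^3 + (3n-5)t^2 + (3n+4)t - 4(n+1) is a Perron number: τ > 1 is a real algebraic integer and every other complex root of D_n has absolute value strictly less than τ. -/

import Mathlib

open Polynomial

/-- The denominator polynomial `D_n(t)`, over `ℂ`. -/
noncomputable def DpolyC (n : ℕ) : Polynomial ℂ :=
  X ^ 9 - C ((n : ℂ) + 3) * X ^ 8 - C ((n : ℂ) - 4) * X ^ 7 + C (2 * (n : ℂ) - 8) * X ^ 6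
    + C (2 * (n : ℂ) + 8) * X ^ 5 + C (2 * (n : ℂ) - 8) * X ^ 4 - C (2 * (n : ℂ) - 11) * X ^ 3
    + C (3 * (n : ℂ) - 5) * X ^ 2 + C (3 * (n : ℂ) + 4) * X - C (4 * ((n : ℂ) + 1))

private lemma aux_upper {t a c hi : ℝ} (ht : 0 < t) (h1 : t*a = c) (h2 : c ≤ hi*t) : a ≤ hi :=
  (mul_le_mul_iff_right₀ ht).mp (by rw [h1]; linarith)

private lemma aux_lower {t a c lo : ℝ} (ht : 0 < t) (h1 : t*a = c) (h2 : lo*t ≤ c) : lo ≤ a :=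
  (mul_le_mul_iff_right₀ ht).mp (by rw [h1]; linarith)

private lemma aux_integral (n : ℕ) (τ : ℝ)
    (hfτ' : τ^9 - ((n:ℝ)+3)*τ^8 - ((n:ℝ)-4)*τ^7 + (2*(n:ℝ)-8)*τ^6 + (2*(n:ℝ)+8)*τ^5
      + (2*(n:ℝ)-8)*τ^4 - (2*(n:ℝ)-11)*τ^3 + (3*(n:ℝ)-5)*τ^2 + (3*(n:ℝ)+4)*τ
      - 4*((n:ℝ)+1) = 0) : IsIntegral ℤ τ := by
  refine ⟨X^9 - C ((n:ℤ)+3)*X^8 - C ((n:ℤ)-4)*X^7 + C (2*(n:ℤ)-8)*X^6 + C (2*(n:ℤ)+8)*X^5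
      + C (2*(n:ℤ)-8)*X^4 - C (2*(n:ℤ)-11)*X^3 + C (3*(n:ℤ)-5)*X^2 + C (3*(n:ℤ)+4)*X
      - C (4*((n:ℤ)+1)), ?_, ?_⟩
  · monicity!
  · show (Polynomial.aeval τ) (X^9 - C ((n:ℤ)+3)*X^8 - C ((n:ℤ)-4)*X^7 + C (2*(n:ℤ)-8)*X^6
      + C (2*(n:ℤ)+8)*X^5 + C (2*(n:ℤ)-8)*X^4 - C (2*(n:ℤ)-11)*X^3 + C (3*(n:ℤ)-5)*X^2
      + C (3*(n:ℤ)+4)*X - C (4*((n:ℤ)+1))) = 0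
    simp only [map_add, map_sub, map_mul, map_pow, map_intCast, map_natCast, map_ofNat,
      map_one, aeval_X, aeval_C, algebraMap_int_eq, eq_intCast]
    linear_combination hfτ'

theorem stmt_9 (n : ℕ) (hn : 0 < n) :
    ∃ τ : ℝ, (DpolyC n).IsRoot (τ : ℂ) ∧
      (∀ s : ℝ, (DpolyC n).IsRoot (s : ℂ) → s ≤ τ) ∧
      1 < τ ∧ IsIntegral ℤ τ ∧
      ∀ z : ℂ, (DpolyC n).IsRoot z → z ≠ (τ : ℂ) → ‖z‖ < τ := by
  have hN1 : (1:ℝ) ≤ (n:ℝ) := by exact_mod_cast hn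
  have hN0 : (0:ℝ) ≤ (n:ℝ) := by linarith
  set f : ℝ → ℝ := fun x => x^9 - ((n:ℝ)+3)*x^8 - ((n:ℝ)-4)*x^7 + (2*(n:ℝ)-8)*x^6
      + (2*(n:ℝ)+8)*x^5 + (2*(n:ℝ)-8)*x^4 - (2*(n:ℝ)-11)*x^3 + (3*(n:ℝ)-5)*x^2
      + (3*(n:ℝ)+4)*x - 4*((n:ℝ)+1) with hf
  have hcont : ContinuousOn f (Set.Icc ((n:ℝ)+2) ((n:ℝ)+4)) := by
    apply Continuous.continuousOn; rw [hf]; fun_prop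
  have h24 : (n:ℝ)+2 ≤ (n:ℝ)+4 := by linarith
  have hlow : f ((n:ℝ)+2) < 0 := by
    have h : f ((n:ℝ)+2) = -(2*(n:ℝ)^8+24*(n:ℝ)^7+122*(n:ℝ)^6+338*(n:ℝ)^5+554*(n:ℝ)^4
        +558*(n:ℝ)^3+364*(n:ℝ)^2+174*(n:ℝ)+56) := by rw [hf]; ring
    rw [h]
    linarith [pow_nonneg hN0 8, pow_nonneg hN0 7, pow_nonneg hN0 6, pow_nonneg hN0 5,
      pow_nonneg hN0 4, pow_nonneg hN0 3, pow_nonneg hN0 2]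
  have hhigh : 0 < f ((n:ℝ)+4) := by
    have h : f ((n:ℝ)+4) = 10*(n:ℝ)^7+266*(n:ℝ)^6+3026*(n:ℝ)^5+19062*(n:ℝ)^4+71734*(n:ℝ)^3
        +161082*(n:ℝ)^2+199588*(n:ℝ)+105084 := by rw [hf]; ring
    rw [h]
    linarith [pow_nonneg hN0 7, pow_nonneg hN0 6, pow_nonneg hN0 5,
      pow_nonneg hN0 4, pow_nonneg hN0 3, pow_nonneg hN0 2]
  have hmem : (0:ℝ) ∈ Set.Icc (f ((n:ℝ)+2)) (f ((n:ℝ)+4)) := ⟨le_of_lt hlow, le_of_lt hhigh⟩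
  obtain ⟨τ, hτmem, hfτ⟩ := intermediate_value_Icc h24 hcont hmem
  have hτ1 : (n:ℝ)+2 ≤ τ := hτmem.1
  have hτ2 : τ ≤ (n:ℝ)+4 := hτmem.2
  have hτ3 : (3:ℝ) ≤ τ := by linarith
  have hτ0 : (0:ℝ) < τ := by linarith
  have hfτ' : τ^9 - ((n:ℝ)+3)*τ^8 - ((n:ℝ)-4)*τ^7 + (2*(n:ℝ)-8)*τ^6 + (2*(n:ℝ)+8)*τ^5
      + (2*(n:ℝ)-8)*τ^4 - (2*(n:ℝ)-11)*τ^3 + (3*(n:ℝ)-5)*τ^2 + (3*(n:ℝ)+4)*τ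
      - 4*((n:ℝ)+1) = 0 := hfτ
  set e7 : ℝ := τ - ((n:ℝ)+3) with he7
  set e6 : ℝ := τ*e7 - ((n:ℝ)-4) with he6
  set e5 : ℝ := τ*e6 + (2*(n:ℝ)-8) with he5
  set e4 : ℝ := τ*e5 + (2*(n:ℝ)+8) with he4
  set e3 : ℝ := τ*e4 + (2*(n:ℝ)-8) with he3
  set e2 : ℝ := τ*e3 - (2*(n:ℝ)-11) with he2
  set e1 : ℝ := τ*e2 + (3*(n:ℝ)-5) with he1
  set e0 : ℝ := τ*e1 + (3*(n:ℝ)+4) with he0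
  have h0 : τ*e0 = 4*(n:ℝ)+4 := by
    rw [he0, he1, he2, he3, he4, he5, he6, he7]; linear_combination hfτ'
  have h0u : e0 ≤ 4 := aux_upper hτ0 h0 (by linarith)
  have h0l : 8/5 ≤ e0 := aux_lower hτ0 h0 (by linarith)
  have rel1 : τ*e1 = e0 - (3*(n:ℝ)+4) := by rw [he0]; ring
  have h1l : -3 ≤ e1 := aux_lower hτ0 rel1 (by linarith)
  have h1u : e1 ≤ -(3/5) := aux_upper hτ0 rel1 (by linarith)
  have rel2 : τ*e2 = e1 - (3*(n:ℝ)-5) := by rw [he1]; ring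
  have h2l : -3 ≤ e2 := aux_lower hτ0 rel2 (by linarith)
  have h2u : e2 ≤ 1/2 := aux_upper hτ0 rel2 (by linarith)
  have rel3 : τ*e3 = e2 + (2*(n:ℝ)-11) := by rw [he2]; ring
  have h3l : -4 ≤ e3 := aux_lower hτ0 rel3 (by linarith)
  have h3u : e3 ≤ 2 := aux_upper hτ0 rel3 (by linarith)
  have rel4 : τ*e4 = e3 - (2*(n:ℝ)-8) := by rw [he3]; ring
  have h4l : -2 ≤ e4 := aux_lower hτ0 rel4 (by linarith)
  have h4u : e4 ≤ 3 := aux_upper hτ0 rel4 (by linarith)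
  have rel5 : τ*e5 = e4 - (2*(n:ℝ)+8) := by rw [he4]; ring
  have h5l : -4 ≤ e5 := aux_lower hτ0 rel5 (by linarith)
  have h5u : e5 ≤ -1 := aux_upper hτ0 rel5 (by linarith)
  have rel6 : τ*e6 = e5 - (2*(n:ℝ)-8) := by rw [he5]; ring
  have h6l : -2 ≤ e6 := aux_lower hτ0 rel6 (by linarith)
  have h6u : e6 ≤ 2 := aux_upper hτ0 rel6 (by linarith)
  have h7l : -1 ≤ e7 := by rw [he7]; linarith
  have h7u : e7 ≤ 1 := by rw [he7]; linarith
  have hfC : (τ:ℂ)^9 - ((n:ℂ)+3)*(τ:ℂ)^8 - ((n:ℂ)-4)*(τ:ℂ)^7 + (2*(n:ℂ)-8)*(τ:ℂ)^6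
      + (2*(n:ℂ)+8)*(τ:ℂ)^5 + (2*(n:ℂ)-8)*(τ:ℂ)^4 - (2*(n:ℂ)-11)*(τ:ℂ)^3
      + (3*(n:ℂ)-5)*(τ:ℂ)^2 + (3*(n:ℂ)+4)*(τ:ℂ) - 4*((n:ℂ)+1) = 0 := by
    have h := congrArg (fun x : ℝ => (x : ℂ)) hfτ'
    push_cast at h
    convert h using 2 <;> push_cast <;> ring
  have hc7 : ((e7:ℝ):ℂ) = (τ:ℂ) - ((n:ℂ)+3) := by rw [he7]; push_cast; ring
  have hc6 : ((e6:ℝ):ℂ) = (τ:ℂ)*((e7:ℝ):ℂ) - ((n:ℂ)-4) := by rw [he6]; push_cast; ring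
  have hc5 : ((e5:ℝ):ℂ) = (τ:ℂ)*((e6:ℝ):ℂ) + (2*(n:ℂ)-8) := by rw [he5]; push_cast; ring
  have hc4 : ((e4:ℝ):ℂ) = (τ:ℂ)*((e5:ℝ):ℂ) + (2*(n:ℂ)+8) := by rw [he4]; push_cast; ring
  have hc3 : ((e3:ℝ):ℂ) = (τ:ℂ)*((e4:ℝ):ℂ) + (2*(n:ℂ)-8) := by rw [he3]; push_cast; ring
  have hc2 : ((e2:ℝ):ℂ) = (τ:ℂ)*((e3:ℝ):ℂ) - (2*(n:ℂ)-11) := by rw [he2]; push_cast; ring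
  have hc1 : ((e1:ℝ):ℂ) = (τ:ℂ)*((e2:ℝ):ℂ) + (3*(n:ℂ)-5) := by rw [he1]; push_cast; ring
  have hc0 : ((e0:ℝ):ℂ) = (τ:ℂ)*((e1:ℝ):ℂ) + (3*(n:ℂ)+4) := by rw [he0]; push_cast; ring
  have hmain : ∀ z : ℂ, (DpolyC n).IsRoot z → z ≠ (τ:ℂ) → ‖z‖ < τ := by
    intro z hz hne
    have hzE : z^9 - ((n:ℂ)+3)*z^8 - ((n:ℂ)-4)*z^7 + (2*(n:ℂ)-8)*z^6 + (2*(n:ℂ)+8)*z^5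
        + (2*(n:ℂ)-8)*z^4 - (2*(n:ℂ)-11)*z^3 + (3*(n:ℂ)-5)*z^2 + (3*(n:ℂ)+4)*z
        - 4*((n:ℂ)+1) = 0 := by
      have h := hz
      simp only [DpolyC, IsRoot, eval_add, eval_sub, eval_mul, eval_pow, eval_X, eval_C] at h
      linear_combination h
    have hfac : (z - (τ:ℂ)) * (z^8 + ((e7:ℝ):ℂ)*z^7 + ((e6:ℝ):ℂ)*z^6 + ((e5:ℝ):ℂ)*z^5 + ((e4:ℝ):ℂ)*z^4 + ((e3:ℝ):ℂ)*z^3 + ((e2:ℝ):ℂ)*z^2 + ((e1:ℝ):ℂ)*z + ((e0:ℝ):ℂ)) = 0 := by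
      rw [hc0, hc1, hc2, hc3, hc4, hc5, hc6, hc7]
      linear_combination hzE - hfC
    have hsum : z^8 + ((e7:ℝ):ℂ)*z^7 + ((e6:ℝ):ℂ)*z^6 + ((e5:ℝ):ℂ)*z^5 + ((e4:ℝ):ℂ)*z^4 + ((e3:ℝ):ℂ)*z^3 + ((e2:ℝ):ℂ)*z^2 + ((e1:ℝ):ℂ)*z + ((e0:ℝ):ℂ) = 0 := by
      rcases mul_eq_zero.mp hfac with h | h
      · exact absurd (sub_eq_zero.mp h) hne
      · exact h
    have hz8 : z^8 = -(((e7:ℝ):ℂ)*z^7 + ((e6:ℝ):ℂ)*z^6 + ((e5:ℝ):ℂ)*z^5 + ((e4:ℝ):ℂ)*z^4 + ((e3:ℝ):ℂ)*z^3 + ((e2:ℝ):ℂ)*z^2 + ((e1:ℝ):ℂ)*z + ((e0:ℝ):ℂ)) := by linear_combination hsum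
    set s : ℝ := ‖z‖ with hs
    have hs0 : 0 ≤ s := norm_nonneg z
    have t7 : ‖((e7:ℝ):ℂ)*z^7‖ = |e7| * s^7 := by rw [norm_mul, Complex.norm_real, Real.norm_eq_abs, norm_pow]
    have t6 : ‖((e6:ℝ):ℂ)*z^6‖ = |e6| * s^6 := by rw [norm_mul, Complex.norm_real, Real.norm_eq_abs, norm_pow]
    have t5 : ‖((e5:ℝ):ℂ)*z^5‖ = |e5| * s^5 := by rw [norm_mul, Complex.norm_real, Real.norm_eq_abs, norm_pow]
    have t4 : ‖((e4:ℝ):ℂ)*z^4‖ = |e4| * s^4 := by rw [norm_mul, Complex.norm_real, Real.norm_eq_abs, norm_pow]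
    have t3 : ‖((e3:ℝ):ℂ)*z^3‖ = |e3| * s^3 := by rw [norm_mul, Complex.norm_real, Real.norm_eq_abs, norm_pow]
    have t2 : ‖((e2:ℝ):ℂ)*z^2‖ = |e2| * s^2 := by rw [norm_mul, Complex.norm_real, Real.norm_eq_abs, norm_pow]
    have t1 : ‖((e1:ℝ):ℂ)*z‖ = |e1| * s := by rw [norm_mul, Complex.norm_real, Real.norm_eq_abs]
    have t0 : ‖((e0:ℝ):ℂ)‖ = |e0| := by rw [Complex.norm_real, Real.norm_eq_abs]
    have u1 := norm_add_le (((e7:ℝ):ℂ)*z^7 + ((e6:ℝ):ℂ)*z^6 + ((e5:ℝ):ℂ)*z^5 + ((e4:ℝ):ℂ)*z^4 + ((e3:ℝ):ℂ)*z^3 + ((e2:ℝ):ℂ)*z^2 + ((e1:ℝ):ℂ)*z) (((e0:ℝ):ℂ))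
    have u2 := norm_add_le (((e7:ℝ):ℂ)*z^7 + ((e6:ℝ):ℂ)*z^6 + ((e5:ℝ):ℂ)*z^5 + ((e4:ℝ):ℂ)*z^4 + ((e3:ℝ):ℂ)*z^3 + ((e2:ℝ):ℂ)*z^2) (((e1:ℝ):ℂ)*z)
    have u3 := norm_add_le (((e7:ℝ):ℂ)*z^7 + ((e6:ℝ):ℂ)*z^6 + ((e5:ℝ):ℂ)*z^5 + ((e4:ℝ):ℂ)*z^4 + ((e3:ℝ):ℂ)*z^3) (((e2:ℝ):ℂ)*z^2)
    have u4 := norm_add_le (((e7:ℝ):ℂ)*z^7 + ((e6:ℝ):ℂ)*z^6 + ((e5:ℝ):ℂ)*z^5 + ((e4:ℝ):ℂ)*z^4) (((e3:ℝ):ℂ)*z^3)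
    have u5 := norm_add_le (((e7:ℝ):ℂ)*z^7 + ((e6:ℝ):ℂ)*z^6 + ((e5:ℝ):ℂ)*z^5) (((e4:ℝ):ℂ)*z^4)
    have u6 := norm_add_le (((e7:ℝ):ℂ)*z^7 + ((e6:ℝ):ℂ)*z^6) (((e5:ℝ):ℂ)*z^5)
    have u7 := norm_add_le (((e7:ℝ):ℂ)*z^7) (((e6:ℝ):ℂ)*z^6)
    have habs : s^8 ≤ |e7| * s^7 + |e6| * s^6 + |e5| * s^5 + |e4| * s^4 + |e3| * s^3 + |e2| * s^2 + |e1| * s + |e0| := by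
      have h1 : s^8 = ‖z^8‖ := by rw [hs, ← norm_pow]
      rw [h1, hz8, norm_neg]
      linarith [u1, u2, u3, u4, u5, u6, u7, t7, t6, t5, t4, t3, t2, t1, t0]
    have b7 : |e7| ≤ 1 := abs_le.mpr ⟨h7l, h7u⟩
    have b6 : |e6| ≤ 2 := abs_le.mpr ⟨h6l, h6u⟩
    have b5 : |e5| ≤ 4 := abs_le.mpr ⟨h5l, by linarith⟩
    have b4 : |e4| ≤ 3 := abs_le.mpr ⟨by linarith, h4u⟩
    have b3 : |e3| ≤ 4 := abs_le.mpr ⟨h3l, by linarith⟩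
    have b2 : |e2| ≤ 3 := abs_le.mpr ⟨h2l, by linarith⟩
    have b1 : |e1| ≤ 3 := abs_le.mpr ⟨h1l, by linarith⟩
    have b0 : |e0| ≤ 4 := abs_le.mpr ⟨by linarith, h0u⟩
    by_contra hcon
    push_neg at hcon
    have hs3 : (3:ℝ) ≤ s := by linarith
    have c2 : 3*s ≤ s^2 := by
      calc 3*s ≤ s*s := mul_le_mul_of_nonneg_right hs3 hs0
        _ = s^2 := by ring
    have c3 : 3*s^2 ≤ s^3 := by
      calc 3*s^2 ≤ s*s^2 := mul_le_mul_of_nonneg_right hs3 (pow_nonneg hs0 2)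
        _ = s^3 := by ring
    have c4 : 3*s^3 ≤ s^4 := by
      calc 3*s^3 ≤ s*s^3 := mul_le_mul_of_nonneg_right hs3 (pow_nonneg hs0 3)
        _ = s^4 := by ring
    have c5 : 3*s^4 ≤ s^5 := by
      calc 3*s^4 ≤ s*s^4 := mul_le_mul_of_nonneg_right hs3 (pow_nonneg hs0 4)
        _ = s^5 := by ring
    have c6 : 3*s^5 ≤ s^6 := by
      calc 3*s^5 ≤ s*s^5 := mul_le_mul_of_nonneg_right hs3 (pow_nonneg hs0 5)
        _ = s^6 := by ring
    have c7 : 3*s^6 ≤ s^7 := by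
      calc 3*s^6 ≤ s*s^6 := mul_le_mul_of_nonneg_right hs3 (pow_nonneg hs0 6)
        _ = s^7 := by ring
    have c8 : 3*s^7 ≤ s^8 := by
      calc 3*s^7 ≤ s*s^7 := mul_le_mul_of_nonneg_right hs3 (pow_nonneg hs0 7)
        _ = s^8 := by ring
    have m7 : |e7| * s^7 ≤ 1*s^7 := mul_le_mul_of_nonneg_right b7 (pow_nonneg hs0 7)
    have m6 : |e6| * s^6 ≤ 2*s^6 := mul_le_mul_of_nonneg_right b6 (pow_nonneg hs0 6)
    have m5 : |e5| * s^5 ≤ 4*s^5 := mul_le_mul_of_nonneg_right b5 (pow_nonneg hs0 5)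
    have m4 : |e4| * s^4 ≤ 3*s^4 := mul_le_mul_of_nonneg_right b4 (pow_nonneg hs0 4)
    have m3 : |e3| * s^3 ≤ 4*s^3 := mul_le_mul_of_nonneg_right b3 (pow_nonneg hs0 3)
    have m2 : |e2| * s^2 ≤ 3*s^2 := mul_le_mul_of_nonneg_right b2 (pow_nonneg hs0 2)
    have m1 : |e1| * s ≤ 3*s := mul_le_mul_of_nonneg_right b1 hs0
    linarith [habs, m7, m6, m5, m4, m3, m2, m1, b0, c2, c3, c4, c5, c6, c7, c8, hs3]
  refine ⟨τ, ?_, ?_, ?_, ?_, hmain⟩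
  · simp only [DpolyC, IsRoot, eval_add, eval_sub, eval_mul, eval_pow, eval_X, eval_C]
    linear_combination hfC
  · intro sr hr
    by_cases h : (sr:ℂ) = (τ:ℂ)
    · have h' : sr = τ := by exact_mod_cast h
      exact h'.le
    · have h1 := hmain _ hr h
      rw [Complex.norm_real, Real.norm_eq_abs] at h1
      linarith [le_abs_self sr]
  · linarith
  · exact aux_integral n τ hfτ'
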